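/- arXiv:2303.11416 — 9 statements merged into one kernel-verified Lean document; each statement's English description precedes it below -/
import Mathlib

section
/- Let G be a finite additive group of order k - 1 for some integer k ≥ 2. Then the family Σ consisting of the single block O_k (the element 0 repeated k times) together with k copies of the multiset G ∪ {0} (all elements of G with 0 taken twice, a multiset of size k) is a harmonious (G, k, k² + k) strong difference family. -/
/-- The multiset of differences of a multisubset `B` of an additive group:
all differences `x - y` over ordered pairs of distinct positions of `B`. -/
def mDiffs {G : Type*} [AddGroup G] [DecidableEq G] (B : Multiset G) : Multiset G :=
  B.bind fun x => (B.erase x).map fun y => x - y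

lemma count_mDiffs_pt {G : Type*} [AddGroup G] [DecidableEq G] (B : Multiset G) (x g : G) :
    ((B.erase x).map fun y => x - y).count g = (B.erase x).count (-g + x) := by
  have h := Multiset.count_map_eq_count' (fun y => x - y) (B.erase x) sub_right_injective (-g + x)
  have h2 : x - (-g + x) = g := by
    rw [sub_eq_add_neg, neg_add_rev, neg_neg, ← add_assoc, add_neg_cancel, zero_add]
  rwa [h2] at h

lemma count_O {G : Type*} [AddGroup G] [DecidableEq G] (k : ℕ) (hk : 1 ≤ k) (g : G) :
    (mDiffs (Multiset.replicate k (0:G))).count g = if g = 0 then k * (k-1) else 0 := by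
  unfold mDiffs
  rw [Multiset.count_bind, Multiset.map_replicate, Multiset.sum_replicate, smul_eq_mul]
  have hrep : (Multiset.replicate k (0:G)).erase 0 = Multiset.replicate (k-1) 0 := by
    conv_lhs => rw [show k = (k-1)+1 by omega]
    rw [Multiset.replicate_succ, Multiset.erase_cons_head]
  rw [hrep, Multiset.map_replicate]
  simp only [sub_zero, Multiset.count_replicate]
  by_cases hg : g = 0
  · simp [hg]
  · simp [hg, eq_comm]

lemma count_B {G : Type*} [AddGroup G] [Fintype G] [DecidableEq G] (g : G) :
    (mDiffs ((Finset.univ.val : Multiset G) + {(0:G)})).count g =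
      if g = 0 then 2 else Fintype.card G + 2 := by
  set B := ((Finset.univ.val : Multiset G) + {(0:G)}) with hB
  have hcnt : ∀ a : G, B.count a = if a = 0 then 2 else 1 := by
    intro a
    rw [hB, Multiset.count_add, Multiset.count_singleton, Multiset.count_univ]
    split_ifs <;> rfl
  unfold mDiffs
  rw [Multiset.count_bind]
  have hterm : ∀ x : G, (Multiset.map (fun y => x - y) (B.erase x)).count g
      = if g = 0 then B.count x - 1 else B.count (-g + x) := by
    intro x
    rw [count_mDiffs_pt]
    split_ifs with h
    · subst h; rw [neg_zero, zero_add, Multiset.count_erase_self]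
    · have hne : -g + x ≠ x := fun hxx => h (by
        have h2 : -g + x = 0 + x := hxx.trans (zero_add x).symm
        simpa [neg_eq_zero] using add_right_cancel h2)
      rw [Multiset.count_erase_of_ne hne]
  rw [Multiset.map_congr rfl (fun x _ => hterm x)]
  split_ifs with h
  · -- g = 0
    have : ∀ x : G, B.count x - 1 = if x = 0 then 1 else 0 := by
      intro x; simp only [hcnt]; split_ifs <;> rfl
    rw [Multiset.map_congr rfl (fun x _ => this x)]
    rw [hB, Multiset.map_add, Multiset.sum_add, Multiset.map_singleton, Multiset.sum_singleton]
    have huniv : (Multiset.map (fun x : G => if x = 0 then 1 else 0) Finset.univ.val).sum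
        = ∑ x : G, (if x = 0 then 1 else 0) := rfl
    rw [huniv]
    simp
  · have : ∀ x : G, B.count (-g + x) = if x = g then 2 else 1 := by
      intro x; simp only [hcnt, neg_add_eq_zero]; simp [eq_comm]
    rw [Multiset.map_congr rfl (fun x _ => this x)]
    rw [hB, Multiset.map_add, Multiset.sum_add, Multiset.map_singleton, Multiset.sum_singleton]
    have huniv : (Multiset.map (fun x : G => if x = g then 2 else 1) Finset.univ.val).sum
        = ∑ x : G, (if x = g then 2 else 1) := rfl
    rw [huniv]
    have hg0 : (0:G) ≠ g := fun hh => h hh.symm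
    have hsum : (∑ x : G, if x = g then 2 else 1) = Fintype.card G + 1 := by
      have he : ∀ x : G, (if x = g then 2 else 1) = (if x = g then 1 else 0) + 1 := by
        intro x; split_ifs <;> rfl
      simp only [he, Finset.sum_add_distrib, Finset.sum_ite_eq' Finset.univ g (fun _ => 1),
        Finset.mem_univ, if_true, Finset.sum_const, Finset.card_univ, smul_eq_mul, mul_one]
      omega
    rw [hsum, if_neg hg0]

/-- If `G` has order `k - 1` (with `k ≥ 2`), then the family consisting of the block
`O_k` (zero repeated `k` times) together with `k` copies of the multiset `G ∪ {0}`
(all elements of `G`, with `0` taken twice) is a harmonious `(G, k, k² + k)`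
strong difference family. -/
theorem classic_harmonious_sdf {G : Type*} [AddGroup G] [Fintype G] [DecidableEq G]
    (k : ℕ) (hk : 2 ≤ k) (hcard : Fintype.card G = k - 1) :
    (∀ g : G,
      (((Multiset.replicate k ((Finset.univ.val : Multiset G) + {(0 : G)}) +
        {Multiset.replicate k (0 : G)}).bind mDiffs).count g) = k ^ 2 + k) ∧
    ((Multiset.replicate k ((Finset.univ.val : Multiset G) + {(0 : G)}) +
        {Multiset.replicate k (0 : G)}).map Multiset.card).sum = k ^ 2 + k := by
  have hk1 : (1:ℕ) ≤ k := by omega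
  obtain ⟨m, rfl⟩ : ∃ m, k = m + 2 := ⟨k - 2, by omega⟩
  constructor
  · intro g
    rw [Multiset.count_bind, Multiset.map_add, Multiset.map_replicate, Multiset.map_singleton,
      Multiset.sum_add, Multiset.sum_replicate, Multiset.sum_singleton, smul_eq_mul,
      count_B, count_O _ hk1, hcard]
    split_ifs <;> simp <;> ring
  · rw [Multiset.map_add, Multiset.map_replicate, Multiset.map_singleton,
      Multiset.sum_add, Multiset.sum_replicate, Multiset.sum_singleton, smul_eq_mul,
      Multiset.card_replicate, Multiset.card_add, Multiset.card_singleton]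
    have : Multiset.card (Finset.univ.val : Multiset G) = Fintype.card G := rfl
    rw [this, hcard]
    simp; ring
end

section
/- Let G be any finite additive group of order k. Then the family consisting of two copies of O_k, (2k - 4) copies of the multiset G (each element once), and one copy of the multiset 2·G (each element of G with multiplicity 2) is a harmonious (G, {k^{2k-2}, 2k}, 2k²) strong difference family. -/
lemma count_mDiffs_replicate_zero {G : Type*} [AddGroup G] [DecidableEq G] (n : ℕ) (g : G) :
    (mDiffs (Multiset.replicate n (0 : G))).count g = if g = 0 then n * (n - 1) else 0 := by
  unfold mDiffs
  rw [Multiset.count_bind]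
  have he : (Multiset.replicate n (0:G)).erase 0 = Multiset.replicate (n-1) 0 := by
    cases n with
    | zero => simp
    | succ m => rw [Multiset.replicate_succ, Multiset.erase_cons_head]; rfl
  have h : ∀ x ∈ Multiset.replicate n (0:G),
      (Multiset.count g (Multiset.map (fun y => x - y) ((Multiset.replicate n (0:G)).erase x)))
        = (if g = 0 then n - 1 else 0) := by
    intro x hx
    rw [Multiset.eq_of_mem_replicate hx, he]
    rcases eq_or_ne g 0 with rfl | hg
    · simp [Multiset.count_replicate]
    · simp [Multiset.count_replicate, hg, Ne.symm hg]
  rw [Multiset.map_congr rfl h, Multiset.map_const', Multiset.sum_replicate, smul_eq_mul]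
  split <;> simp [Nat.mul_comm]

lemma count_mDiffs_const {G : Type*} [AddGroup G] [DecidableEq G]
    (s : Multiset G) (c : ℕ) (hc : ∀ y, s.count y = c) (g : G) :
    (mDiffs s).count g = Multiset.card s * (if g = 0 then c - 1 else c) := by
  unfold mDiffs
  rw [Multiset.count_bind]
  have h : ∀ x ∈ s, (((s.erase x).map fun y => x - y).count g)
      = (if g = 0 then c - 1 else c) := by
    intro x _
    have hinj : Function.Injective (fun y : G => x - y) := fun a b h => by
      simpa using h
    have key := Multiset.count_map_eq_count' (fun y : G => x - y) (s.erase x) hinj (-g + x)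
    have hb : x - (-g + x) = g := by
      rw [sub_eq_add_neg, neg_add_rev, neg_neg, ← add_assoc, add_neg_cancel, zero_add]
    rw [hb] at key
    rw [key]
    by_cases hg : g = 0
    · subst hg
      simp [Multiset.count_erase_self, hc]
    · rw [if_neg hg, Multiset.count_erase_of_ne, hc]
      intro h
      apply hg
      have h' : -g = 0 := add_right_cancel (h.trans (zero_add x).symm)
      simpa using h'
  rw [Multiset.map_congr rfl h, Multiset.map_const', Multiset.sum_replicate, smul_eq_mul]

/-- For a group `G` of order `k` (with `k ≥ 2`), the family consisting of two copies of
`O_k`, `2k - 4` copies of the multiset `G` (each element once) and one copy of the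
multiset `2·G` (each element twice) is a harmonious `(G, {k^{2k-2}, 2k}, 2k²)` strong
difference family. -/
theorem harmonious_sdf_two_k_squared {G : Type*} [AddGroup G] [Fintype G] [DecidableEq G]
    (k : ℕ) (hk : 2 ≤ k) (hcard : Fintype.card G = k) :
    (∀ g : G,
      (((Multiset.replicate 2 (Multiset.replicate k (0 : G)) +
          Multiset.replicate (2 * k - 4) (Finset.univ.val : Multiset G) +
          {(Finset.univ.val : Multiset G) + (Finset.univ.val : Multiset G)}).bind
            mDiffs).count g) = 2 * k ^ 2) ∧
    ((Multiset.replicate 2 (Multiset.replicate k (0 : G)) +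
        Multiset.replicate (2 * k - 4) (Finset.univ.val : Multiset G) +
        {(Finset.univ.val : Multiset G) + (Finset.univ.val : Multiset G)}).map
          Multiset.card).sum = 2 * k ^ 2 ∧
    ((Multiset.replicate 2 (Multiset.replicate k (0 : G)) +
        Multiset.replicate (2 * k - 4) (Finset.univ.val : Multiset G) +
        {(Finset.univ.val : Multiset G) + (Finset.univ.val : Multiset G)}).map
          Multiset.card) = Multiset.replicate (2 * k - 2) k + {2 * k} := by
  obtain ⟨m, rfl⟩ : ∃ m, k = m + 2 := ⟨k - 2, by omega⟩
  have hcardU : Multiset.card (Finset.univ.val : Multiset G) = m + 2 := by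
    simpa [Finset.card_univ] using hcard
  have hcount1 : ∀ y : G, (Finset.univ.val : Multiset G).count y = 1 :=
    Multiset.count_univ
  have hcount2 : ∀ y : G,
      ((Finset.univ.val : Multiset G) + (Finset.univ.val : Multiset G)).count y = 2 := by
    intro y; rw [Multiset.count_add, hcount1]
  have h24 : 2 * (m + 2) - 4 = 2 * m := by omega
  refine ⟨?_, ?_, ?_⟩
  · intro g
    rw [Multiset.count_bind]
    simp only [Multiset.map_add, Multiset.map_replicate, Multiset.map_singleton,
      Multiset.sum_add, Multiset.sum_replicate, Multiset.sum_singleton, smul_eq_mul]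
    rw [count_mDiffs_replicate_zero, count_mDiffs_const _ 1 hcount1 g,
      count_mDiffs_const _ 2 hcount2 g, hcardU, Multiset.card_add, hcardU, h24]
    by_cases hg : g = 0 <;> simp [hg] <;> ring
  · simp only [Multiset.map_add, Multiset.map_replicate, Multiset.map_singleton,
      Multiset.sum_add, Multiset.sum_replicate, Multiset.sum_singleton, smul_eq_mul,
      Multiset.card_replicate, Multiset.card_add, hcardU, h24]
    ring
  · simp only [Multiset.map_add, Multiset.map_replicate, Multiset.map_singleton,
      Multiset.card_replicate, Multiset.card_add, hcardU, h24]
    have : 2 * (m + 2) - 2 = 2 + 2 * m := by omega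
    rw [this, Multiset.replicate_add]
    congr 1
    have h2 : m + 2 + (m + 2) = 2 * (m + 2) := by ring
    rw [h2]
end

section
/- Let G be a group of order k and let h > k + 1 be an integer. Define multisets X = O_k (zero repeated k times), Y = G (each element once), and Z = O_{h-k} ∪ G (zero repeated h - k additional times together with all of G). Then the family Σ consisting of h - k copies of X, h² - hk - 2h + k copies of Y, and k copies of Z is a harmonious (G, {k^{h(h-k-1)}, h^k}, hk(h-k)) strong difference family: its combined difference multiset covers every element of G exactly hk(h - k) times, it has h(h-k-1) blocks of size k and k blocks of size h, and the block sizes sum to hk(h - k). -/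
lemma count_mDiffs {G : Type*} [AddGroup G] [DecidableEq G] (B : Multiset G) (g : G) :
    (mDiffs B).count g = (B.map fun x => (B.erase x).count (-g + x)).sum := by
  rw [mDiffs, Multiset.count_bind]
  congr 1
  refine Multiset.map_congr rfl fun x _ => ?_
  have hx : x - (-g + x) = g := by
    rw [sub_eq_add_neg, neg_add_rev, neg_neg, ← add_assoc, add_neg_cancel, zero_add]
  conv_lhs => rw [show g = (fun y => x - y) (-g + x) from hx.symm]
  exact Multiset.count_map_eq_count' _ _ sub_right_injective _

lemma negadd_eq_self_iff {G : Type*} [AddGroup G] (g x : G) : -g + x = x ↔ g = 0 := by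
  constructor
  · intro h
    have := add_right_cancel (b := x) (by simpa using h)
    simpa using this.symm ▸ (neg_eq_zero.mp (by simpa using this))
  · rintro rfl; simp

lemma count_mDiffs_X {G : Type*} [AddGroup G] [DecidableEq G] (k : ℕ) (g : G) :
    (mDiffs (Multiset.replicate k (0 : G))).count g = if g = 0 then k * (k - 1) else 0 := by
  rw [count_mDiffs, Multiset.map_replicate, Multiset.sum_replicate, smul_eq_mul]
  by_cases hg : g = 0
  · subst hg
    simp [Multiset.count_erase_self, Multiset.count_replicate]
  · have h1 : -g + (0:G) ≠ 0 := by simpa using hg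
    rw [Multiset.count_erase_of_ne h1, Multiset.count_replicate]
    simp [Ne.symm h1, hg]

lemma count_mDiffs_Y {G : Type*} [AddGroup G] [Fintype G] [DecidableEq G] (g : G) :
    (mDiffs (Finset.univ.val : Multiset G)).count g =
      if g = 0 then 0 else Fintype.card G := by
  rw [count_mDiffs]
  by_cases hg : g = 0
  · subst hg
    rw [Multiset.map_congr rfl (fun x _ => by
      simp [Multiset.count_erase_self, Multiset.count_univ] :
        ∀ x ∈ (Finset.univ.val : Multiset G),
        ((Finset.univ.val : Multiset G).erase x).count (-0 + x) = (0:ℕ))]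
    simp
  · rw [Multiset.map_congr rfl (fun x _ => by
      rw [Multiset.count_erase_of_ne (fun he => hg ((negadd_eq_self_iff g x).mp he)),
        Multiset.count_univ] :
        ∀ x ∈ (Finset.univ.val : Multiset G),
        ((Finset.univ.val : Multiset G).erase x).count (-g + x) = (1:ℕ))]
    simp [hg, Finset.card_univ]

lemma count_Z {G : Type*} [AddGroup G] [Fintype G] [DecidableEq G] (d : ℕ) (a : G) :
    (Multiset.replicate d (0 : G) + (Finset.univ.val : Multiset G)).count a =
      (if a = 0 then d else 0) + 1 := by
  rw [Multiset.count_add, Multiset.count_replicate, Multiset.count_univ]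
  by_cases h : a = 0 <;> simp [h, eq_comm]

lemma count_mDiffs_Z {G : Type*} [AddGroup G] [Fintype G] [DecidableEq G] (d : ℕ) (g : G) :
    (mDiffs (Multiset.replicate d (0 : G) + (Finset.univ.val : Multiset G))).count g =
      if g = 0 then d * (d + 1) else 2 * d + Fintype.card G := by
  set Z : Multiset G := Multiset.replicate d (0 : G) + (Finset.univ.val : Multiset G) with hZ
  have hceZ : ∀ x a : G, (Z.erase x).count a =
      ((if a = 0 then d else 0) + 1) - (if a = x then 1 else 0) := by
    intro x a
    by_cases hax : a = x
    · subst hax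
      rw [Multiset.count_erase_self, hZ, count_Z]
      simp
    · rw [Multiset.count_erase_of_ne hax, hZ, count_Z]
      simp [hax]
  rw [count_mDiffs, hZ, Multiset.map_add, Multiset.sum_add, Multiset.map_replicate,
    Multiset.sum_replicate, smul_eq_mul, ← hZ]
  have huniv : ((Finset.univ.val : Multiset G).map fun x => (Z.erase x).count (-g + x)).sum
      = ∑ x : G, (Z.erase x).count (-g + x) := rfl
  by_cases hg : g = 0
  · subst hg
    have h0 : (Z.erase (0:G)).count (-(0:G) + 0) = d := by
      rw [hceZ]; simp
    rw [h0, huniv]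
    have key : ∀ x : G, (Z.erase x).count (-0 + x) = if x = 0 then d else 0 := by
      intro x
      rw [hceZ]
      by_cases hx : x = 0 <;> simp [hx]
    rw [Finset.sum_congr rfl fun x _ => key x, Finset.sum_ite_eq']
    simp only [Finset.mem_univ, if_true, if_pos rfl]
    ring
  · have h0 : (Z.erase (0:G)).count (-g + 0) = 1 := by
      rw [hceZ]
      simp [hg]
    rw [h0, huniv]
    have key : ∀ x : G, (Z.erase x).count (-g + x) = (if x = g then d else 0) + 1 := by
      intro x
      rw [hceZ]
      have hne : -g + x ≠ x := fun h => hg ((negadd_eq_self_iff g x).mp h)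
      by_cases hx : x = g
      · subst hx
        rw [if_pos (neg_add_cancel x), if_neg hne, if_pos rfl, Nat.sub_zero]
      · have hxg : -g + x ≠ 0 := fun h => hx (by
          have : x = g := by
            have := congrArg (g + ·) h
            simpa [← add_assoc] using this
          exact this)
        simp [hxg, hne, hx]
    rw [Finset.sum_congr rfl fun x _ => key x, Finset.sum_add_distrib,
      Finset.sum_ite_eq', Finset.sum_const, Finset.card_univ]
    simp only [Finset.mem_univ, if_true, smul_eq_mul, mul_one, if_neg hg]
    omega

/-- For `G` of order `k` and `h > k + 1`, the family consisting of `h - k` copies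
of `X = O_k`, `h² - hk - 2h + k` copies of `Y = G` and `k` copies of
`Z = O_{h-k} ∪ G` is a harmonious `(G, {k^{h(h-k-1)}, h^k}, hk(h-k))` strong
difference family: its combined difference multiset covers every element of `G`
exactly `hk(h-k)` times, it has `h(h-k-1)` blocks of size `k` and `k` blocks of
size `h`, and the block sizes sum to `hk(h-k)`. -/
theorem fundamental_harmonious_sdf {G : Type*} [AddGroup G] [Fintype G] [DecidableEq G]
    (k h : ℕ) (hcard : Fintype.card G = k) (hh : k + 1 < h) :
    (∀ g : G,
      (((Multiset.replicate (h - k) (Multiset.replicate k (0 : G)) +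
          Multiset.replicate (h ^ 2 - h * k - 2 * h + k) (Finset.univ.val : Multiset G) +
          Multiset.replicate k
            (Multiset.replicate (h - k) (0 : G) + (Finset.univ.val : Multiset G))).bind
              mDiffs).count g) = h * k * (h - k)) ∧
    ((Multiset.replicate (h - k) (Multiset.replicate k (0 : G)) +
        Multiset.replicate (h ^ 2 - h * k - 2 * h + k) (Finset.univ.val : Multiset G) +
        Multiset.replicate k
          (Multiset.replicate (h - k) (0 : G) + (Finset.univ.val : Multiset G))).map
            Multiset.card).sum = h * k * (h - k) ∧
    Multiset.card
      (((Multiset.replicate (h - k) (Multiset.replicate k (0 : G)) +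
        Multiset.replicate (h ^ 2 - h * k - 2 * h + k) (Finset.univ.val : Multiset G) +
        Multiset.replicate k
          (Multiset.replicate (h - k) (0 : G) + (Finset.univ.val : Multiset G))).filter
            fun B => Multiset.card B = k)) = h * (h - k - 1) ∧
    Multiset.card
      (((Multiset.replicate (h - k) (Multiset.replicate k (0 : G)) +
        Multiset.replicate (h ^ 2 - h * k - 2 * h + k) (Finset.univ.val : Multiset G) +
        Multiset.replicate k
          (Multiset.replicate (h - k) (0 : G) + (Finset.univ.val : Multiset G))).filter
            fun B => Multiset.card B = h)) = k := by
  have hk1 : 0 < k := hcard ▸ Fintype.card_pos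
  obtain ⟨p, rfl⟩ : ∃ p, k = p + 1 := ⟨k - 1, by omega⟩
  set k := p + 1 with hkdef
  obtain ⟨m, rfl⟩ : ∃ m, h = k + m + 2 := ⟨h - k - 2, by omega⟩
  set h := k + m + 2 with hdef
  have hd : h - k = m + 2 := by omega
  have hd1 : h - k - 1 = m + 1 := by omega
  have hk2 : k - 1 = p := by omega
  have hb : h ^ 2 - h * k - 2 * h + k = h * m + k := by
    rw [show h ^ 2 = h * k + (2 * h + h * m) by rw [hdef]; ring,
      Nat.add_sub_cancel_left, Nat.add_sub_cancel_left]
  have cardX : Multiset.card (Multiset.replicate k (0 : G)) = k := Multiset.card_replicate _ _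
  have cardY : Multiset.card (Finset.univ.val : Multiset G) = k := hcard
  have cardZ : Multiset.card
      (Multiset.replicate (h - k) (0 : G) + (Finset.univ.val : Multiset G)) = h := by
    rw [Multiset.card_add, Multiset.card_replicate, cardY]; omega
  refine ⟨fun g => ?_, ?_, ?_, ?_⟩
  · rw [Multiset.count_bind, Multiset.map_add, Multiset.map_add, Multiset.sum_add,
      Multiset.sum_add, Multiset.map_replicate, Multiset.map_replicate, Multiset.map_replicate,
      Multiset.sum_replicate, Multiset.sum_replicate, Multiset.sum_replicate,
      smul_eq_mul, smul_eq_mul, smul_eq_mul, count_mDiffs_X, count_mDiffs_Y, count_mDiffs_Z,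
      hcard, hb, hd]
    by_cases hg : g = 0
    · simp only [if_pos hg]
      rw [hk2, hdef, hkdef]; ring
    · simp only [if_neg hg]
      rw [hdef, hkdef]; ring
  · rw [Multiset.map_add, Multiset.map_add, Multiset.sum_add, Multiset.sum_add,
      Multiset.map_replicate, Multiset.map_replicate, Multiset.map_replicate,
      Multiset.sum_replicate, Multiset.sum_replicate, Multiset.sum_replicate,
      smul_eq_mul, smul_eq_mul, smul_eq_mul, cardX, cardY, cardZ, hb, hd]
    rw [hdef, hkdef]; ring
  · rw [Multiset.filter_add, Multiset.filter_add,
      Multiset.filter_eq_self.2 (fun B hB => by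
        rw [Multiset.eq_of_mem_replicate hB, cardX]),
      Multiset.filter_eq_self.2 (fun B hB => by
        rw [Multiset.eq_of_mem_replicate hB, cardY]),
      Multiset.filter_eq_nil.2 (fun B hB => by
        rw [Multiset.eq_of_mem_replicate hB, cardZ]; omega)]
    rw [Multiset.card_add, Multiset.card_add, Multiset.card_replicate, Multiset.card_replicate,
      Multiset.card_zero, hb, hd1, hd]
    rw [hdef, hkdef]; ring
  · rw [Multiset.filter_add, Multiset.filter_add,
      Multiset.filter_eq_nil.2 (fun B hB => by
        rw [Multiset.eq_of_mem_replicate hB, cardX]; omega),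
      Multiset.filter_eq_nil.2 (fun B hB => by
        rw [Multiset.eq_of_mem_replicate hB, cardY]; omega),
      Multiset.filter_eq_self.2 (fun B hB => by
        rw [Multiset.eq_of_mem_replicate hB, cardZ])]
    simp
end

section
/- Let H be a subgroup of order u of a finite group G of order v, and let F be a (G, H, K', 1) relative difference family. Then the collection consisting of all translates B + g (B ∈ F, g ∈ G) together with all right cosets of H in G is the block set of a linear space S(2, K, v), where K is the underlying set of K' ∪ {u}: every 2-subset of G is contained in exactly one block of this collection. -/
set_option maxHeartbeats 1000000

lemma bind_count_le_one_unique {α β : Type*} [DecidableEq β] {s : Multiset α}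
    {f : α → Multiset β} {d : β} (h : (s.bind f).count d ≤ 1)
    {b₁ b₂ : α} (h₁ : b₁ ∈ s) (h₂ : b₂ ∈ s) (hd₁ : d ∈ f b₁) (hd₂ : d ∈ f b₂) :
    b₁ = b₂ := by
  by_contra hne
  obtain ⟨t, rfl⟩ := Multiset.exists_cons_of_mem h₁
  have h₂' : b₂ ∈ t := by
    rcases Multiset.mem_cons.mp h₂ with h | h
    · exact absurd h.symm hne
    · exact h
  obtain ⟨t', rfl⟩ := Multiset.exists_cons_of_mem h₂'
  simp only [Multiset.cons_bind, Multiset.count_add] at h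
  have c1 : 1 ≤ (f b₁).count d := Multiset.one_le_count_iff_mem.mpr hd₁
  have c2 : 1 ≤ (f b₂).count d := Multiset.one_le_count_iff_mem.mpr hd₂
  omega

lemma count_le_of_mem_bind {α β : Type*} [DecidableEq β] {s : Multiset α}
    {f : α → Multiset β} {d : β} {b : α} (hb : b ∈ s) :
    (f b).count d ≤ (s.bind f).count d := by
  obtain ⟨t, rfl⟩ := Multiset.exists_cons_of_mem hb
  simp only [Multiset.cons_bind, Multiset.count_add]
  omega

/-- membership characterization of `mDiffs` of a finset -/
lemma mem_mDiffs {G : Type*} [AddGroup G] [DecidableEq G] {B : Finset G} {d : G} :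
    d ∈ mDiffs B.val ↔ ∃ a ∈ B, ∃ b ∈ B, a ≠ b ∧ a - b = d := by
  simp only [mDiffs, Multiset.mem_bind, Multiset.mem_map]
  constructor
  · rintro ⟨a, ha, b, hb, rfl⟩
    rw [← Finset.erase_val, Finset.mem_val, Finset.mem_erase] at hb
    exact ⟨a, ha, b, hb.2, (Ne.symm hb.1), rfl⟩
  · rintro ⟨a, ha, b, hb, hne, rfl⟩
    refine ⟨a, ha, b, ?_, rfl⟩
    rw [← Finset.erase_val, Finset.mem_val, Finset.mem_erase]
    exact ⟨Ne.symm hne, hb⟩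

lemma translate_key {G : Type*} [AddGroup G] {a b x y : G} (h : a - b = x - y) :
    b + (-a + x) = y := by
  have h2 : -a + x = -b + y := by
    calc -a + x = -a + ((x - y) + y) := by simp [sub_eq_add_neg, add_assoc]
    _ = -a + ((a - b) + y) := by rw [← h]
    _ = -b + y := by simp [sub_eq_add_neg, ← add_assoc]
  rw [h2, add_neg_cancel_left]

/-- If `F` is a `(G, H, K', 1)` relative difference family (its combined difference
lists cover every element of `G \ H` exactly once and no element of `H`), then the
translates `B + g` of the blocks of `F` together with the right cosets of `H` form
the block set of a linear space: every pair of distinct points of `G` is contained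
in exactly one of these blocks. -/
theorem relative_df_gives_linear_space {G : Type*} [AddGroup G] [Fintype G] [DecidableEq G]
    (H : AddSubgroup G) [DecidablePred (· ∈ H)]
    (F : Multiset (Finset G))
    (hDF : ∀ g : G, ((F.bind fun B => mDiffs B.val).count g) = if g ∈ H then 0 else 1)
    (x y : G) (hxy : x ≠ y) :
    ∃! C : Finset G,
      ((∃ B ∈ F, ∃ g : G, C = B.image (· + g)) ∨
        (∃ g : G, C = Finset.univ.filter fun z => z + -g ∈ H)) ∧
      x ∈ C ∧ y ∈ C := by
  set d := x - y with hd
  have hdcount := hDF d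
  by_cases hH : d ∈ H
  · -- coset case
    rw [if_pos hH] at hdcount
    refine ⟨Finset.univ.filter fun z => z + -x ∈ H, ⟨Or.inr ⟨x, rfl⟩, ?_, ?_⟩, ?_⟩
    · simp [H.zero_mem]
    · simp only [Finset.mem_filter, Finset.mem_univ, true_and]
      have : y + -x = -(x - y) := by simp [sub_eq_add_neg]
      rw [this]
      exact neg_mem hH
    · rintro C ⟨hC | hC, hx, hy⟩
      · exfalso
        obtain ⟨B, hB, g, rfl⟩ := hC
        obtain ⟨a, ha, hax⟩ := Finset.mem_image.mp hx
        obtain ⟨b, hb, hby⟩ := Finset.mem_image.mp hy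
        have hab : a ≠ b := fun h => hxy (by rw [← hax, ← hby, h])
        have habd : a - b = d := by
          rw [hd, ← hax, ← hby, add_sub_add_right_eq_sub]
        have hmem : d ∈ mDiffs B.val := mem_mDiffs.mpr ⟨a, ha, b, hb, hab, habd⟩
        have : 1 ≤ ((F.bind fun B => mDiffs B.val).count d) := by
          calc 1 ≤ (mDiffs B.val).count d := Multiset.one_le_count_iff_mem.mpr hmem
          _ ≤ _ := count_le_of_mem_bind (f := fun B => mDiffs B.val) hB
        omega
      · obtain ⟨g, rfl⟩ := hC
        have hxg : x + -g ∈ H := (Finset.mem_filter.mp hx).2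
        ext z
        simp only [Finset.mem_filter, Finset.mem_univ, true_and]
        constructor
        · intro hz
          have : z + -x = (z + -g) + -(x + -g) := by
            simp [neg_add_rev, add_assoc]
          rw [this]
          exact add_mem hz (neg_mem hxg)
        · intro hz
          have : z + -g = (z + -x) + (x + -g) := by
            simp [add_assoc]
          rw [this]
          exact add_mem hz hxg
  · -- translate case
    rw [if_neg hH] at hdcount
    have hmem : d ∈ F.bind fun B => mDiffs B.val :=
      Multiset.one_le_count_iff_mem.mp (by omega)
    obtain ⟨B, hB, hdB⟩ := Multiset.mem_bind.mp hmem
    obtain ⟨a, ha, b, hb, hab, habd⟩ := mem_mDiffs.mp hdB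
    refine ⟨B.image (· + (-a + x)), ⟨Or.inl ⟨B, hB, -a + x, rfl⟩, ?_, ?_⟩, ?_⟩
    · exact Finset.mem_image.mpr ⟨a, ha, by simp⟩
    · exact Finset.mem_image.mpr ⟨b, hb, translate_key (by rw [habd, hd])⟩
    · rintro C ⟨hC | hC, hx, hy⟩
      · obtain ⟨B', hB', g', rfl⟩ := hC
        obtain ⟨a', ha', hax⟩ := Finset.mem_image.mp hx
        obtain ⟨b', hb', hby⟩ := Finset.mem_image.mp hy
        have hab' : a' ≠ b' := fun h => hxy (by rw [← hax, ← hby, h])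
        have habd' : a' - b' = d := by
          rw [hd, ← hax, ← hby, add_sub_add_right_eq_sub]
        have hBB : B' = B := by
          refine bind_count_le_one_unique (f := fun B => mDiffs B.val)
            (le_of_eq hdcount) hB' hB ?_ hdB
          exact mem_mDiffs.mpr ⟨a', ha', b', hb', hab', habd'⟩
        subst hBB
        have hle : (mDiffs B'.val).count d ≤ 1 :=
          le_trans (count_le_of_mem_bind (f := fun B => mDiffs B.val) hB')
            (le_of_eq hdcount)
        have haa : a' = a := by
          refine bind_count_le_one_unique
            (f := fun c => (B'.val.erase c).map fun e => c - e) hle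
            (Finset.mem_val.mpr ha') (Finset.mem_val.mpr ha) ?_ ?_
          · refine Multiset.mem_map.mpr ⟨b', ?_, habd'⟩
            rw [← Finset.erase_val, Finset.mem_val, Finset.mem_erase]
            exact ⟨Ne.symm hab', hb'⟩
          · refine Multiset.mem_map.mpr ⟨b, ?_, habd⟩
            rw [← Finset.erase_val, Finset.mem_val, Finset.mem_erase]
            exact ⟨Ne.symm hab, hb⟩
        have hg : g' = -a + x := by
          rw [← haa, ← hax, neg_add_cancel_left]
        rw [hg]
      · exfalso
        obtain ⟨g, rfl⟩ := hC
        have hxg : x + -g ∈ H := (Finset.mem_filter.mp hx).2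
        have hyg : y + -g ∈ H := (Finset.mem_filter.mp hy).2
        have : d ∈ H := by
          have hde : d = (x + -g) + -(y + -g) := by
            rw [hd]
            simp [sub_eq_add_neg, neg_add_rev, add_assoc]
          rw [hde]
          exact add_mem hxg (neg_mem hyg)
        exact hH this
end

section
/- Let H be a subgroup of a finite additive group G and let F be a resolvable (G, H, K', 1)-DF, and set P = {B + h : B ∈ F, h ∈ H} ∪ {H}. Then the stabilizer of P under the right translation action of G equals H; in particular, if some g ∈ G satisfies P + g = P, then g ∈ H. -/
section aux

variable {G : Type*} [AddGroup G] [DecidableEq G]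

lemma mem_mDiffs_of {B : Multiset G} {b1 b2 : G} (h1 : b1 ∈ B) (h2 : b2 ∈ B)
    (hne : b2 ≠ b1) : b1 - b2 ∈ mDiffs B :=
  Multiset.mem_bind.mpr ⟨b1, h1, Multiset.mem_map.mpr
    ⟨b2, (Multiset.mem_erase_of_ne hne).mpr h2, rfl⟩⟩

lemma exists_of_mem_mDiffs {B : Finset G} {g : G} (h : g ∈ mDiffs B.val) :
    ∃ b1 ∈ B, ∃ b2 ∈ B, b2 ≠ b1 ∧ b1 - b2 = g := by
  obtain ⟨b1, hb1, hg⟩ := Multiset.mem_bind.mp h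
  obtain ⟨b2, hb2, rfl⟩ := Multiset.mem_map.mp hg
  have h2 := (Multiset.Nodup.mem_erase_iff B.nodup).mp hb2
  exact ⟨b1, hb1, b2, h2.2, h2.1, rfl⟩

lemma two_le_count_mDiffs {B : Finset G} {g b1 b2 c1 c2 : G}
    (hb1 : b1 ∈ B) (hb2 : b2 ∈ B) (hc1 : c1 ∈ B) (hc2 : c2 ∈ B)
    (hbne : b2 ≠ b1) (hcne : c2 ≠ c1) (hbc : c1 ≠ b1)
    (hbg : b1 - b2 = g) (hcg : c1 - c2 = g) :
    2 ≤ Multiset.count g (mDiffs B.val) := by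
  rw [mDiffs]
  nth_rewrite 1 [← Multiset.cons_erase (Finset.mem_def.mp hb1)]
  rw [Multiset.cons_bind, Multiset.count_add]
  have m1 : 0 < Multiset.count g ((B.val.erase b1).map fun y => b1 - y) :=
    Multiset.count_pos.mpr (Multiset.mem_map.mpr
      ⟨b2, (Multiset.mem_erase_of_ne hbne).mpr hb2, hbg⟩)
  have m2 : 0 < Multiset.count g
      ((B.val.erase b1).bind fun x => (B.val.erase x).map fun y => x - y) :=
    Multiset.count_pos.mpr (Multiset.mem_bind.mpr
      ⟨c1, (Multiset.mem_erase_of_ne hbc).mpr hc1, Multiset.mem_map.mpr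
        ⟨c2, (Multiset.mem_erase_of_ne hcne).mpr hc2, hcg⟩⟩)
  omega

lemma two_le_count_bind {F : Multiset (Finset G)} {B B' : Finset G} {g : G}
    (hB : B ∈ F) (hB' : B' ∈ F) (hne : B' ≠ B)
    (h1 : g ∈ mDiffs B.val) (h2 : g ∈ mDiffs B'.val) :
    2 ≤ Multiset.count g (F.bind fun B => mDiffs B.val) := by
  nth_rewrite 1 [← Multiset.cons_erase hB]
  rw [Multiset.cons_bind, Multiset.count_add]
  have m1 : 0 < Multiset.count g (mDiffs B.val) := Multiset.count_pos.mpr h1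
  have m2 : 0 < Multiset.count g ((F.erase B).bind fun B => mDiffs B.val) :=
    Multiset.count_pos.mpr (Multiset.mem_bind.mpr
      ⟨B', (Multiset.mem_erase_of_ne hne).mpr hB', h2⟩)
  omega

end aux

/-- Let `F` be a resolvable `(G, H, K', 1)` relative difference family and let
`P = {B + h : B ∈ F, h ∈ H} ∪ {H}`. Then the stabilizer of `P` under the right
translation action of `G` is exactly `H`: for every `g ∈ G`, `P + g = P` if and
only if `g ∈ H`. -/
theorem stabilizer_of_pdf_eq_subgroup {G : Type*} [AddGroup G] [Fintype G] [DecidableEq G]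
    (H : AddSubgroup G) [DecidablePred (· ∈ H)]
    (F : Multiset (Finset G))
    (hDF : ∀ g : G, ((F.bind fun B => mDiffs B.val).count g) = if g ∈ H then 0 else 1)
    (hres : ∀ g : G,
      Multiset.card ((F.bind Finset.val).filter fun x => -g + x ∈ H) =
        if g ∈ H then 0 else 1) :
    ∀ g : G,
      (((F.bind fun B => (Finset.univ.filter fun h => h ∈ H).val.map fun h =>
          B.image (· + h)) + {Finset.univ.filter fun h => h ∈ H}).map fun C =>
            C.image (· + g)) =
        ((F.bind fun B => (Finset.univ.filter fun h => h ∈ H).val.map fun h =>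
          B.image (· + h)) + {Finset.univ.filter fun h => h ∈ H}) ↔ g ∈ H := by
  intro g
  set Hf : Finset G := Finset.univ.filter fun h => h ∈ H with hHf
  constructor
  · intro hP
    by_contra hg
    have hcount := hDF g
    rw [if_neg hg] at hcount
    have hmem : g ∈ F.bind fun B => mDiffs B.val := by
      rw [← Multiset.count_pos, hcount]; norm_num
    obtain ⟨B, hBF, hgB⟩ := Multiset.mem_bind.mp hmem
    obtain ⟨b1, hb1, b2, hb2, hbne, hbg⟩ := exists_of_mem_mDiffs hgB
    have hBP : B ∈ (F.bind fun B => Hf.val.map fun h => B.image (· + h)) +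
        ({Hf} : Multiset (Finset G)) := by
      refine Multiset.mem_add.mpr (Or.inl (Multiset.mem_bind.mpr
        ⟨B, hBF, Multiset.mem_map.mpr ⟨0, ?_, ?_⟩⟩))
      · simp [hHf, H.zero_mem]
      · simp
    have hBg : B.image (· + g) ∈ (F.bind fun B => Hf.val.map fun h => B.image (· + h)) +
        ({Hf} : Multiset (Finset G)) := by
      rw [← hP]
      exact Multiset.mem_map_of_mem _ hBP
    rcases Multiset.mem_add.mp hBg with hcase | hcase
    · obtain ⟨B', hB'F, hB'⟩ := Multiset.mem_bind.mp hcase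
      obtain ⟨h, hh, himg⟩ := Multiset.mem_map.mp hB'
      have hhH : h ∈ H := by simpa [hHf] using hh
      have e1 : b1 + g ∈ B'.image (· + h) := by
        rw [himg]; exact Finset.mem_image_of_mem _ hb1
      have e2 : b2 + g ∈ B'.image (· + h) := by
        rw [himg]; exact Finset.mem_image_of_mem _ hb2
      obtain ⟨b1', hb1', eq1⟩ := Finset.mem_image.mp e1
      obtain ⟨b2', hb2', eq2⟩ := Finset.mem_image.mp e2
      have diff : b1' - b2' = g := by
        have : b1' + h - (b2' + h) = b1 + g - (b2 + g) := by rw [eq1, eq2]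
        rw [add_sub_add_right_eq_sub, add_sub_add_right_eq_sub, hbg] at this
        exact this
      have hne' : b2' ≠ b1' := by
        intro e
        rw [e] at eq2
        exact hbne (add_right_cancel (eq1.symm.trans eq2)).symm
      by_cases hBB : B' = B
      · subst hBB
        have hb1b1' : b1' ≠ b1 := by
          intro e
          rw [e] at eq1
          exact hg (add_left_cancel eq1 ▸ hhH)
        have h2 := two_le_count_mDiffs hb1 hb2 hb1' hb2' hbne hne' hb1b1' hbg diff
        have hle : Multiset.count g (mDiffs B'.val) ≤
            Multiset.count g (F.bind fun B => mDiffs B.val) :=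
          Multiset.count_le_of_le _ (Multiset.le_bind F hBF)
        omega
      · have h2 := two_le_count_bind hBF hB'F hBB hgB
          (diff ▸ mem_mDiffs_of hb1' hb2' hne')
        omega
    · have hEq : B.image (· + g) = Hf := Multiset.mem_singleton.mp hcase
      have m1 : b1 + g ∈ Hf := by
        rw [← hEq]; exact Finset.mem_image_of_mem _ hb1
      have m2 : b2 + g ∈ Hf := by
        rw [← hEq]; exact Finset.mem_image_of_mem _ hb2
      have m1' : b1 + g ∈ H := by simpa [hHf] using m1
      have m2' : b2 + g ∈ H := by simpa [hHf] using m2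
      have : b1 + g - (b2 + g) ∈ H := H.sub_mem m1' m2'
      rw [add_sub_add_right_eq_sub, hbg] at this
      exact hg this
  · intro hg
    have hmul : Hf.val.map (· + g) = Hf.val := by
      refine (Multiset.Nodup.ext ?_ Hf.nodup).mpr ?_
      · exact Hf.nodup.map fun a b hab => by simpa using hab
      · intro a
        simp only [Multiset.mem_map, ← Finset.mem_def, hHf, Finset.mem_filter,
          Finset.mem_univ, true_and]
        constructor
        · rintro ⟨y, hy, rfl⟩; exact H.add_mem hy hg
        · intro ha; exact ⟨a - g, H.sub_mem ha hg, sub_add_cancel a g⟩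
    rw [Multiset.map_add]
    congr 1
    · rw [Multiset.map_bind]
      refine Multiset.bind_congr fun B hB => ?_
      rw [Multiset.map_map]
      conv_rhs => rw [← hmul, Multiset.map_map]
      refine Multiset.map_congr rfl fun h hh => ?_
      simp only [Function.comp_apply, Finset.image_image]
      congr 1
      funext x
      simp [add_assoc]
    · rw [Multiset.map_singleton]
      congr 1
      ext x
      simp only [Finset.mem_image, hHf, Finset.mem_filter, Finset.mem_univ, true_and]
      constructor
      · rintro ⟨y, hy, rfl⟩; exact H.add_mem hy hg
      · intro hx; exact ⟨x - g, H.sub_mem hx hg, sub_add_cancel x g⟩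
end

section
/- Let G be a finite group, q a prime power with q ≡ 1 (mod λ), and suppose a (G, K, λ) strong difference family Σ admits a good lifting L to G × F_q with good companion set S (i.e., |S| = (q-1)/λ and S·Δ_g = F_q^* for every g ∈ G, where ΔL = ⋃_{g∈G} {g} × Δ_g). Then F = {B_s : B ∈ L, s ∈ S}, where B_s is obtained from B by multiplying second coordinates by s, is a (G × F_q, G × {0}, nK, 1) relative difference family with n = (q-1)/λ: the combined difference lists of F cover every element of (G × F_q) \ (G × {0}) exactly once. -/
lemma mDiffs_map {G H : Type*} [AddGroup G] [AddGroup H] [DecidableEq G] [DecidableEq H]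
    (f : G → H) (hf : ∀ a b, f (a - b) = f a - f b) (B : Multiset G) :
    mDiffs (B.map f) = (mDiffs B).map f := by
  unfold mDiffs
  rw [Multiset.bind_map, Multiset.map_bind]
  apply Multiset.bind_congr
  intro x hx
  rw [← Multiset.map_erase_of_mem f B hx, Multiset.map_map, Multiset.map_map]
  apply Multiset.map_congr rfl
  intro y _
  simp [hf]

/-- Lifting construction: if a `(G, K, λ)` strong difference family `Σ` admits a good
lifting `L` to `G × F_q` with good companion `S` (of size `(q-1)/λ`, with
`S·Δ_g = F_q^*` for every `g ∈ G`), then the family `{B_s : B ∈ L, s ∈ S}`, where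
`B_s` multiplies the second coordinates of `B` by `s`, is a relative difference
family over `G × {0}`: its combined difference lists cover every element of
`(G × F_q) \ (G × {0})` exactly once and no element of `G × {0}`. -/
theorem good_lifting_gives_relative_df {G F : Type*} [AddGroup G] [Fintype G] [DecidableEq G]
    [Field F] [Fintype F] [DecidableEq F]
    (lam : ℕ) (Sig : Multiset (Multiset G))
    (hSDF : ∀ g : G, ((Sig.bind mDiffs).count g) = lam)
    (L : Multiset (Finset (G × F)))
    (hlift : L.map (fun B => B.val.map Prod.fst) = Sig)
    (S : Finset F) (hScard : S.card * lam = Fintype.card F - 1)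
    (hgood : ∀ g : G, ∀ t : F,
      ((S.val.bind fun s =>
        (((L.bind fun B => mDiffs B.val).filter fun p => p.1 = g).map fun p =>
          s * p.2)).count t) = if t = 0 then 0 else 1) :
    ∀ x : G × F,
      (((L.bind fun B => S.val.map fun s => B.image fun p => (p.1, s * p.2)).bind
        fun C => mDiffs C.val).count x) = if x.2 = 0 then 0 else 1 := by
  -- 0 is not in S
  have hz : (0 : F) ∉ S := by
    intro h0
    have hM : (L.bind fun B => mDiffs B.val) = 0 := by
      by_contra hne
      obtain ⟨p, hp⟩ := Multiset.exists_mem_of_ne_zero hne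
      have hg := hgood p.1 0
      rw [if_pos rfl] at hg
      have hmem : (0:F) ∈ S.val.bind fun s =>
          (((L.bind fun B => mDiffs B.val).filter fun q => q.1 = p.1).map fun q => s * q.2) :=
        Multiset.mem_bind.2 ⟨0, h0,
          Multiset.mem_map.2 ⟨p, Multiset.mem_filter.2 ⟨hp, rfl⟩, by ring⟩⟩
      rw [← Multiset.count_pos] at hmem
      omega
    have hlam : lam = 0 := by
      have h1 : Sig.bind mDiffs = 0 := by
        rw [← hlift, Multiset.bind_map]
        have : (L.bind fun B => mDiffs (B.val.map Prod.fst))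
            = (L.bind fun B => (mDiffs B.val).map Prod.fst) :=
          Multiset.bind_congr fun B _ => mDiffs_map Prod.fst (fun _ _ => rfl) B.val
        rw [this, ← Multiset.map_bind, hM, Multiset.map_zero]
      have := hSDF 0
      rw [h1] at this
      simpa using this.symm
    rw [hlam, Nat.mul_zero] at hScard
    have : 1 < Fintype.card F := Fintype.one_lt_card
    omega
  intro x
  obtain ⟨g, t⟩ := x
  have key : ((L.bind fun B => S.val.map fun s => B.image fun p => (p.1, s * p.2)).bind
      fun C => mDiffs C.val)
      = S.val.bind fun s =>
          ((L.bind fun B => mDiffs B.val).map fun p => (p.1, s * p.2)) := by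
    rw [Multiset.bind_assoc]
    have step1 : (L.bind fun B =>
        (S.val.map fun s => B.image fun p => (p.1, s * p.2)).bind fun C => mDiffs C.val)
        = L.bind fun B => S.val.bind fun s =>
            (mDiffs B.val).map fun p => (p.1, s * p.2) := by
      apply Multiset.bind_congr
      intro B _
      rw [Multiset.bind_map]
      apply Multiset.bind_congr
      intro s hs
      have hsne : s ≠ 0 := fun h => hz (h ▸ hs)
      have hinj : Function.Injective (fun p : G × F => (p.1, s * p.2)) := by
        intro a b hab
        simp only [Prod.mk.injEq] at hab
        exact Prod.ext hab.1 (mul_left_cancel₀ hsne hab.2)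
      have hval : (B.image fun p => (p.1, s * p.2)).val
          = B.val.map fun p => (p.1, s * p.2) := by
        rw [Finset.image_val, Multiset.dedup_eq_self.2 (B.nodup.map hinj)]
      rw [hval, mDiffs_map _ (fun a b => by simp [mul_sub]) B.val]
    rw [step1, Multiset.bind_bind, ← Multiset.bind_congr
      fun s _ => (Multiset.map_bind L (fun B => mDiffs B.val) fun p => (p.1, s * p.2))]
  rw [key, Multiset.count_bind]
  have hg := hgood g t
  rw [Multiset.count_bind] at hg
  rw [← hg]
  congr 1
  apply Multiset.map_congr rfl
  intro s _
  rw [Multiset.count_map, Multiset.count_map, Multiset.filter_filter]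
  congr 1
  apply Multiset.filter_congr
  intro p _
  simp [Prod.ext_iff, eq_comm, and_comm]
end

section
/- Let X, Y be finite groups and Z = X × Y. Given a resolvable (G × X, G × {0}, K₁, 1)-DF F_X, a resolvable (G × Y, G × {0}, K₂, 1)-DF F_Y, and a homogeneous (Y, max(K₁), 1) difference matrix M, the family consisting of all blocks B∘M^c = {(g_i, x_i, m_{ic}) : i} for B = {(g_i,x_i)} ∈ F_X and columns c of M, together with all blocks {(g_i, 0, y_i)} for {(g_i, y_i)} ∈ F_Y, is a resolvable (G × Z, G × {0}, K, 1)-DF with K = |Y| copies of K₁ together with K₂. -/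
section Aux
variable {α β G H : Type*}

lemma countP_eq_sum_map (q : α → Prop) [DecidablePred q] (m : Multiset α) :
    Multiset.countP q m = (m.map fun a => if q a then 1 else 0).sum := by
  induction m using Multiset.induction with
  | empty => simp
  | cons a m ih => simp [Multiset.countP_cons, ih]; omega

lemma countP_bind (q : α → Prop) [DecidablePred q] (s : Multiset β) (f : β → Multiset α) :
    Multiset.countP q (s.bind f) = (s.map fun b => Multiset.countP q (f b)).sum := by
  induction s using Multiset.induction with
  | empty => simp
  | cons a s ih => simp [Multiset.countP_add, ih]

lemma card_filter_bind {α β : Type*} (q : α → Prop) [DecidablePred q] (s : Multiset β)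
    (f : β → Multiset α) :
    Multiset.card ((s.bind f).filter q) = (s.map fun b => Multiset.card ((f b).filter q)).sum := by
  rw [← Multiset.countP_eq_card_filter, countP_bind]
  exact congrArg _ (Multiset.map_congr rfl fun b _ => Multiset.countP_eq_card_filter q (f b))

lemma sum_map_sum (s : Finset β) (m : Multiset α) (g : β → α → ℕ) :
    ∑ c ∈ s, (m.map (g c)).sum = (m.map fun a => ∑ c ∈ s, g c a).sum := by
  induction m using Multiset.induction with
  | empty => simp
  | cons a m ih => simp [Finset.sum_add_distrib, ih]

lemma sum_ite_eq_one_of_bijective [Fintype α] [DecidableEq β] {h : α → β}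
    (hb : Function.Bijective h) (y : β) :
    (∑ c : α, if y = h c then 1 else 0) = 1 := by
  obtain ⟨c0, rfl⟩ := hb.surjective y
  rw [← Finset.card_filter, Finset.card_eq_one]
  refine ⟨c0, Finset.eq_singleton_iff_unique_mem.mpr ⟨by simp, fun x hx => ?_⟩⟩
  exact (hb.injective (Finset.mem_filter.mp hx).2).symm

lemma mDiffs_map_inj [AddGroup G] [DecidableEq G] [AddGroup H] [DecidableEq H]
    (f : G → H) (hf : Function.Injective f) (m : Multiset G) :
    mDiffs (m.map f) = m.bind fun a => (m.erase a).map fun b => f a - f b := by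
  unfold mDiffs
  rw [Multiset.bind_map]
  refine Multiset.bind_congr (fun a _ => ?_)
  rw [← Multiset.map_erase f hf, Multiset.map_map]
  rfl

def idx {α : Type*} [DecidableEq α] (B : List α) (e : α) : ℕ := List.idxOf e B

lemma idx_lt_length [DecidableEq α] {B : List α} {a : α} (h : a ∈ B) : idx B a < B.length :=
  List.idxOf_lt_length_iff.mpr h

lemma idx_inj [DecidableEq α] {B : List α} {a b : α} (ha : a ∈ B) (hb : b ∈ B)
    (h : idx B a = idx B b) : a = b :=
  (List.idxOf_inj ha).mp h

lemma enum_map_eq [DecidableEq α] (B : List α) (hB : B.Nodup) (h : ℕ → α → β) :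
    B.zipIdx.map (fun q => h q.2 q.1) = B.map (fun e => h (idx B e) e) := by
  apply List.ext_getElem
  · simp
  · intro i h1 h2
    simp only [List.getElem_map, List.getElem_zipIdx, idx, zero_add]
    rw [List.Nodup.idxOf_getElem hB]

end Aux

section Block
variable {G X Y : Type*} [AddGroup G] [DecidableEq G] [AddGroup X] [DecidableEq X]
  [AddGroup Y] [Fintype Y] [DecidableEq Y]

lemma count_map_eq_sum {α β : Type*} [DecidableEq β] (h : α → β) (m : Multiset α) (p : β) :
    Multiset.count p (m.map h) = (m.map fun a => if p = h a then 1 else 0).sum := by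
  rw [Multiset.count_map, ← Multiset.countP_eq_card_filter, countP_eq_sum_map]

lemma f_inj (M : ℕ → Fin (Fintype.card Y) → Y) (B : List (G × X)) (c : Fin (Fintype.card Y)) :
    Function.Injective (fun e : G × X => (e.1, e.2, M (idx B e) c)) := by
  intro a b h
  simp only [Prod.ext_iff] at h
  exact Prod.ext h.1 h.2.1

lemma block_val (M : ℕ → Fin (Fintype.card Y) → Y) (B : List (G × X)) (hB : B.Nodup)
    (c : Fin (Fintype.card Y)) :
    ((B.zipIdx.map fun q => (q.1.1, q.1.2, M q.2 c)).toFinset.val : Multiset (G × X × Y))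
      = (B : Multiset (G × X)).map (fun e => (e.1, e.2, M (idx B e) c)) := by
  have h1 : (B.zipIdx.map fun q => (q.1.1, q.1.2, M q.2 c))
      = B.map (fun e => (e.1, e.2, M (idx B e) c)) :=
    enum_map_eq B hB (fun i e => (e.1, e.2, M i c))
  rw [h1, List.toFinset_val, List.dedup_eq_self.mpr (hB.map (f_inj M B c))]
  simp

lemma block_diff_count (M : ℕ → Fin (Fintype.card Y) → Y) (kmax : ℕ)
    (hMdm : ∀ r, r < kmax → ∀ r', r' < kmax → r ≠ r' →
      Function.Bijective fun c => M r c - M r' c)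
    (B : List (G × X)) (hB : B.Nodup) (hlen : B.length ≤ kmax) (p : G × X × Y) :
    (∑ c : Fin (Fintype.card Y),
        Multiset.count p (mDiffs ((B.zipIdx.map fun q => (q.1.1, q.1.2, M q.2 c)).toFinset.val)))
      = Multiset.count (p.1, p.2.1) (mDiffs (B : Multiset (G × X))) := by
  have key : ∀ a ∈ (B : Multiset (G × X)), ∀ b ∈ (B : Multiset (G × X)).erase a,
      (∑ c : Fin (Fintype.card Y),
          if p = ((a.1, a.2, M (idx B a) c) - (b.1, b.2, M (idx B b) c) : G × X × Y)
          then 1 else 0)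
        = if (p.1, p.2.1) = a - b then 1 else 0 := by
    intro a ha b hb
    have hBn : (B : Multiset (G × X)).Nodup := by exact_mod_cast hB
    have hba := (hBn.mem_erase_iff.mp hb)
    have hne : idx B a ≠ idx B b := fun h =>
      hba.1.symm (idx_inj (by exact_mod_cast ha) (by exact_mod_cast hba.2) h)
    have hia : idx B a < kmax :=
      lt_of_lt_of_le (idx_lt_length (by exact_mod_cast ha)) hlen
    have hib : idx B b < kmax :=
      lt_of_lt_of_le (idx_lt_length (by exact_mod_cast hba.2)) hlen
    have hiff : ∀ c, (p = ((a.1, a.2, M (idx B a) c) - (b.1, b.2, M (idx B b) c) : G × X × Y))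
        ↔ ((p.1, p.2.1) = a - b ∧ p.2.2 = M (idx B a) c - M (idx B b) c) := by
      intro c
      simp [Prod.ext_iff]
      tauto
    by_cases h2 : (p.1, p.2.1) = a - b
    · simp only [hiff, h2, true_and]
      exact sum_ite_eq_one_of_bijective (hMdm _ hia _ hib hne) p.2.2
    · simp only [hiff, h2, false_and, if_false, Finset.sum_const_zero]
  calc (∑ c : Fin (Fintype.card Y),
        Multiset.count p (mDiffs ((B.zipIdx.map fun q => (q.1.1, q.1.2, M q.2 c)).toFinset.val)))
      = ∑ c : Fin (Fintype.card Y),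
          ((B : Multiset (G × X)).map fun a =>
            (((B : Multiset (G × X)).erase a).map fun b =>
              if p = ((a.1, a.2, M (idx B a) c) - (b.1, b.2, M (idx B b) c) : G × X × Y)
              then 1 else 0).sum).sum := by
        refine Finset.sum_congr rfl fun c _ => ?_
        rw [block_val M B hB c, mDiffs_map_inj _ (f_inj M B c), Multiset.count_bind]
        refine congrArg _ (Multiset.map_congr rfl fun a ha => ?_)
        rw [count_map_eq_sum]
    _ = ((B : Multiset (G × X)).map fun a =>
            (((B : Multiset (G × X)).erase a).map fun b =>
              if (p.1, p.2.1) = a - b then 1 else 0).sum).sum := by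
        rw [sum_map_sum]
        refine congrArg _ (Multiset.map_congr rfl fun a ha => ?_)
        rw [sum_map_sum]
        exact congrArg _ (Multiset.map_congr rfl fun b hb => key a ha b hb)
    _ = Multiset.count (p.1, p.2.1) (mDiffs (B : Multiset (G × X))) := by
        unfold mDiffs
        rw [Multiset.count_bind]
        refine congrArg _ (Multiset.map_congr rfl fun a ha => ?_).symm
        rw [count_map_eq_sum]

end Block

section Rest
set_option linter.unusedSectionVars false
variable {G X Y : Type*} [AddGroup G] [DecidableEq G] [AddGroup X] [DecidableEq X]
  [AddGroup Y] [Fintype Y] [DecidableEq Y]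

lemma block_res_count (M : ℕ → Fin (Fintype.card Y) → Y) (kmax : ℕ)
    (hMhom : ∀ r < kmax, Function.Bijective (M r))
    (B : List (G × X)) (hB : B.Nodup) (hlen : B.length ≤ kmax) (z : X × Y) :
    (∑ c : Fin (Fintype.card Y),
        Multiset.card (((B.zipIdx.map fun q => (q.1.1, q.1.2, M q.2 c)).toFinset.val).filter
          fun e => e.2 = z))
      = Multiset.card ((B : Multiset (G × X)).filter fun e => e.2 = z.1) := by
  have key : ∀ a ∈ (B : Multiset (G × X)),
      (∑ c : Fin (Fintype.card Y), if ((a.2, M (idx B a) c) : X × Y) = z then 1 else 0)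
        = if a.2 = z.1 then 1 else 0 := by
    intro a ha
    have hia : idx B a < kmax := lt_of_lt_of_le (idx_lt_length (by exact_mod_cast ha)) hlen
    by_cases h2 : a.2 = z.1
    · have hiff : ∀ c, (((a.2, M (idx B a) c) : X × Y) = z) = (z.2 = M (idx B a) c) :=
        fun c => propext ⟨fun h => by rw [← h], fun h => Prod.ext h2 h.symm⟩
      simp only [hiff, if_pos h2]
      exact sum_ite_eq_one_of_bijective (hMhom _ hia) z.2
    · have hiff : ∀ c, ¬ (((a.2, M (idx B a) c) : X × Y) = z) :=
        fun c h => h2 (congrArg Prod.fst h)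
      rw [if_neg h2]
      exact Finset.sum_eq_zero fun c _ => if_neg (hiff c)
  calc (∑ c : Fin (Fintype.card Y),
        Multiset.card (((B.zipIdx.map fun q => (q.1.1, q.1.2, M q.2 c)).toFinset.val).filter
          fun e => e.2 = z))
      = ∑ c : Fin (Fintype.card Y),
          ((B : Multiset (G × X)).map fun a =>
            if ((a.2, M (idx B a) c) : X × Y) = z then 1 else 0).sum := by
        refine Finset.sum_congr rfl fun c _ => ?_
        rw [block_val M B hB c, Multiset.filter_map, Multiset.card_map,
          ← Multiset.countP_eq_card_filter, countP_eq_sum_map]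
        rfl
    _ = ((B : Multiset (G × X)).map fun a => if a.2 = z.1 then 1 else 0).sum := by
        rw [sum_map_sum]
        exact congrArg _ (Multiset.map_congr rfl fun a ha => key a ha)
    _ = Multiset.card ((B : Multiset (G × X)).filter fun e => e.2 = z.1) := by
        rw [← countP_eq_sum_map, Multiset.countP_eq_card_filter]

lemma iota_inj : Function.Injective (fun p : G × Y => (p.1, (0 : X), p.2)) := by
  intro a b h
  simp only [Prod.ext_iff] at h
  exact Prod.ext h.1 h.2.2

lemma image_val (B : Finset (G × Y)) :
    ((B.image fun p => (p.1, (0 : X), p.2)).val : Multiset (G × X × Y))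
      = B.val.map fun p => (p.1, (0 : X), p.2) :=
  Finset.image_val_of_injOn (iota_inj.injOn)

lemma mDiffs_map_iota (m : Multiset (G × Y)) :
    mDiffs (m.map fun p => (p.1, (0 : X), p.2))
      = (mDiffs m).map fun p => (p.1, (0 : X), p.2) := by
  rw [mDiffs_map_inj _ iota_inj]
  unfold mDiffs
  rw [Multiset.map_bind]
  refine Multiset.bind_congr fun a _ => ?_
  rw [Multiset.map_map]
  refine Multiset.map_congr rfl fun b _ => ?_
  simp [Prod.ext_iff]

lemma fy_diff_count (B : Finset (G × Y)) (p : G × X × Y) :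
    Multiset.count p (mDiffs ((B.image fun p => (p.1, (0 : X), p.2)).val))
      = if p.2.1 = 0 then Multiset.count (p.1, p.2.2) (mDiffs B.val) else 0 := by
  rw [image_val, mDiffs_map_iota]
  obtain ⟨g, x, y⟩ := p
  by_cases hx : x = 0
  · subst hx
    simp only [if_pos rfl]
    exact Multiset.count_map_eq_count' _ _ iota_inj (g, y)
  · rw [if_neg hx]
    refine Multiset.count_eq_zero.mpr fun hmem => ?_
    obtain ⟨q, _, heq⟩ := Multiset.mem_map.mp hmem
    simp only [Prod.ext_iff] at heq
    exact hx heq.2.1.symm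

lemma fy_res_count (B : Finset (G × Y)) (z : X × Y) :
    Multiset.card (((B.image fun p => (p.1, (0 : X), p.2)).val).filter fun e => e.2 = z)
      = if z.1 = 0 then Multiset.card (B.val.filter fun e => e.2 = z.2) else 0 := by
  rw [image_val, Multiset.filter_map, Multiset.card_map]
  obtain ⟨zx, zy⟩ := z
  by_cases hx : zx = 0
  · subst hx
    rw [if_pos rfl]
    congr 1
    refine Multiset.filter_congr fun a _ => ?_
    simp [Prod.ext_iff]
  · rw [if_neg hx]
    rw [Multiset.card_eq_zero]
    refine Multiset.filter_eq_nil.mpr fun a _ => ?_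
    simp only [Function.comp]
    intro h
    simp only [Prod.ext_iff] at h
    exact hx h.1.symm

lemma blk_card (M : ℕ → Fin (Fintype.card Y) → Y) (B : List (G × X)) (hB : B.Nodup)
    (c : Fin (Fintype.card Y)) :
    ((B.zipIdx.map fun q => (q.1.1, q.1.2, M q.2 c)).toFinset).card = B.length := by
  have h1 : (B.zipIdx.map fun q => (q.1.1, q.1.2, M q.2 c))
      = B.map (fun e => (e.1, e.2, M (idx B e) c)) :=
    enum_map_eq B hB (fun i e => (e.1, e.2, M i c))
  rw [h1, List.toFinset_card_of_nodup (hB.map (f_inj M B c)), List.length_map]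

end Rest

/-- Composition via difference matrices: from a resolvable `(G × X, G × {0}, K₁, 1)`-DF
`F_X` (blocks given as duplicate-free lists so that rows of the difference matrix can
be assigned to entries), a resolvable `(G × Y, G × {0}, K₂, 1)`-DF `F_Y`, and a
homogeneous `(Y, max K₁, 1)` difference matrix `M` (with `|Y|` columns), the family of
all blocks `B ∘ M^c = {(g_i, x_i, M i c)}` together with all blocks `{(g_i, 0, y_i)}`
is a resolvable `(G × X × Y, G × {0}, |Y|·K₁ ∪ K₂, 1)`-DF. -/
theorem composition_with_difference_matrix {G X Y : Type*}
    [AddGroup G] [Fintype G] [DecidableEq G]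
    [AddGroup X] [Fintype X] [DecidableEq X]
    [AddGroup Y] [Fintype Y] [DecidableEq Y]
    (FX : Multiset (List (G × X))) (hFXnodup : ∀ B ∈ FX, B.Nodup)
    (hFXdf : ∀ p : G × X,
      ((FX.bind fun B => mDiffs (B : Multiset (G × X))).count p) =
        if p.2 = 0 then 0 else 1)
    (hFXres : ∀ x : X,
      Multiset.card ((FX.bind fun B => (B : Multiset (G × X))).filter fun p => p.2 = x) =
        if x = 0 then 0 else 1)
    (FY : Multiset (Finset (G × Y)))
    (hFYdf : ∀ p : G × Y,
      ((FY.bind fun B => mDiffs B.val).count p) = if p.2 = 0 then 0 else 1)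
    (hFYres : ∀ y : Y,
      Multiset.card ((FY.bind Finset.val).filter fun p => p.2 = y) =
        if y = 0 then 0 else 1)
    (kmax : ℕ) (hkmax : ∀ B ∈ FX, B.length ≤ kmax)
    (M : ℕ → Fin (Fintype.card Y) → Y)
    (hMhom : ∀ r < kmax, Function.Bijective (M r))
    (hMdm : ∀ r, r < kmax → ∀ r', r' < kmax → r ≠ r' →
      Function.Bijective fun c => M r c - M r' c) :
    (∀ p : G × X × Y,
      ((((FX.bind fun B => (Finset.univ : Finset (Fin (Fintype.card Y))).val.map fun c =>
          (B.zipIdx.map fun q => (q.1.1, q.1.2, M q.2 c)).toFinset) +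
        FY.map fun B => B.image fun p => (p.1, (0 : X), p.2)).bind fun C =>
          mDiffs C.val).count p) = if p.2 = 0 then 0 else 1) ∧
    (∀ z : X × Y,
      Multiset.card
        ((((FX.bind fun B => (Finset.univ : Finset (Fin (Fintype.card Y))).val.map fun c =>
            (B.zipIdx.map fun q => (q.1.1, q.1.2, M q.2 c)).toFinset) +
          FY.map fun B => B.image fun p => (p.1, (0 : X), p.2)).bind Finset.val).filter
            fun p => p.2 = z) = if z = 0 then 0 else 1) ∧
    (((FX.bind fun B => (Finset.univ : Finset (Fin (Fintype.card Y))).val.map fun c =>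
          (B.zipIdx.map fun q => (q.1.1, q.1.2, M q.2 c)).toFinset) +
        FY.map fun B => B.image fun p => (p.1, (0 : X), p.2)).map Finset.card) =
      (FX.bind fun B => Multiset.replicate (Fintype.card Y) B.length) +
        FY.map Finset.card := by
  refine ⟨?_, ?_, ?_⟩
  · -- difference family property
    intro p
    rw [Multiset.add_bind, Multiset.count_add]
    have hA : Multiset.count p
        (((FX.bind fun B => (Finset.univ : Finset (Fin (Fintype.card Y))).val.map fun c =>
          (B.zipIdx.map fun q => (q.1.1, q.1.2, M q.2 c)).toFinset)).bind fun C => mDiffs C.val)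
        = if p.2.1 = 0 then 0 else 1 := by
      rw [Multiset.bind_assoc, Multiset.count_bind]
      have : ∀ B ∈ FX, Multiset.count p
          ((((Finset.univ : Finset (Fin (Fintype.card Y))).val.map fun c =>
            (B.zipIdx.map fun q => (q.1.1, q.1.2, M q.2 c)).toFinset)).bind fun C => mDiffs C.val)
          = Multiset.count (p.1, p.2.1) (mDiffs (B : Multiset (G × X))) := by
        intro B hB
        rw [Multiset.bind_map, Multiset.count_bind, ← Finset.sum_eq_multiset_sum]
        exact block_diff_count M kmax hMdm B (hFXnodup B hB) (hkmax B hB) p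
      rw [Multiset.map_congr rfl this, ← Multiset.count_bind]
      exact hFXdf (p.1, p.2.1)
    have hC : Multiset.count p
        ((FY.map fun B => B.image fun p => (p.1, (0 : X), p.2)).bind fun C => mDiffs C.val)
        = if p.2.1 = 0 then (if p.2.2 = 0 then 0 else 1) else 0 := by
      rw [Multiset.bind_map, Multiset.count_bind]
      have : ∀ B ∈ FY, Multiset.count p (mDiffs ((B.image fun p => (p.1, (0 : X), p.2)).val))
          = if p.2.1 = 0 then Multiset.count (p.1, p.2.2) (mDiffs B.val) else 0 :=
        fun B _ => fy_diff_count B p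
      rw [Multiset.map_congr rfl this]
      by_cases hx : p.2.1 = 0
      · simp only [hx, eq_self_iff_true, if_true]
        rw [← Multiset.count_bind]
        exact hFYdf (p.1, p.2.2)
      · simp [hx]
    rw [hA, hC]
    obtain ⟨g, x, y⟩ := p
    simp only [Prod.mk_eq_zero]
    by_cases hx : x = 0 <;> by_cases hy : y = 0 <;> simp [hx, hy]
  · -- resolvability
    intro z
    rw [← Multiset.countP_eq_card_filter, Multiset.add_bind, Multiset.countP_add]
    have hA : Multiset.countP (fun p : G × X × Y => p.2 = z)
        (((FX.bind fun B => (Finset.univ : Finset (Fin (Fintype.card Y))).val.map fun c =>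
          (B.zipIdx.map fun q => (q.1.1, q.1.2, M q.2 c)).toFinset)).bind Finset.val)
        = if z.1 = 0 then 0 else 1 := by
      rw [Multiset.bind_assoc, countP_bind]
      have : ∀ B ∈ FX, Multiset.countP (fun p : G × X × Y => p.2 = z)
          ((((Finset.univ : Finset (Fin (Fintype.card Y))).val.map fun c =>
            (B.zipIdx.map fun q => (q.1.1, q.1.2, M q.2 c)).toFinset)).bind Finset.val)
          = Multiset.card ((B : Multiset (G × X)).filter fun e => e.2 = z.1) := by
        intro B hB
        rw [Multiset.bind_map, countP_bind, ← Finset.sum_eq_multiset_sum]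
        rw [← block_res_count M kmax hMhom B (hFXnodup B hB) (hkmax B hB) z]
        exact Finset.sum_congr rfl fun c _ => Multiset.countP_eq_card_filter _ _
      rw [Multiset.map_congr rfl this, ← card_filter_bind]
      exact hFXres z.1
    have hC : Multiset.countP (fun p : G × X × Y => p.2 = z)
        ((FY.map fun B => B.image fun p => (p.1, (0 : X), p.2)).bind Finset.val)
        = if z.1 = 0 then (if z.2 = 0 then 0 else 1) else 0 := by
      rw [Multiset.bind_map, countP_bind]
      have : ∀ B ∈ FY, Multiset.countP (fun p : G × X × Y => p.2 = z)
          ((B.image fun p => (p.1, (0 : X), p.2)).val)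
          = if z.1 = 0 then Multiset.card (B.val.filter fun e => e.2 = z.2) else 0 := by
        intro B _
        rw [Multiset.countP_eq_card_filter]
        exact fy_res_count B z
      rw [Multiset.map_congr rfl this]
      by_cases hx : z.1 = 0
      · simp only [hx, eq_self_iff_true, if_true]
        rw [← card_filter_bind]
        exact hFYres z.2
      · simp [hx]
    rw [hA, hC]
    obtain ⟨x, y⟩ := z
    simp only [Prod.mk_eq_zero]
    by_cases hx : x = 0 <;> by_cases hy : y = 0 <;> simp [hx, hy]
  · -- block sizes
    rw [Multiset.map_add]
    congr 1
    · rw [Multiset.map_bind]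
      refine Multiset.bind_congr fun B hB => ?_
      rw [Multiset.map_map]
      have : ∀ c ∈ (Finset.univ : Finset (Fin (Fintype.card Y))).val,
          (Finset.card ∘ fun c =>
            (B.zipIdx.map fun q => (q.1.1, q.1.2, M q.2 c)).toFinset) c = B.length :=
        fun c _ => blk_card M B (hFXnodup B hB) c
      rw [Multiset.map_congr rfl this]
      simp [Multiset.map_const']
    · rw [Multiset.map_map]
      refine Multiset.map_congr rfl fun B _ => ?_
      exact Finset.card_image_of_injective B iota_inj
end

section
/- For fixed e ≥ 2, the function n ↦ Q(e, n) := (1/4)·(U + √(U² + 4n e^{n-1}))², where U = Σ_{h=1}^{n} C(n,h)(e-1)^h (h-1), is strictly increasing in n for n ≥ 1. -/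
/-- `U(e, n) = Σ_{h=1}^{n} C(n,h) (e-1)^h (h-1)`. -/
noncomputable def Ufun (e n : ℕ) : ℝ :=
  ∑ h ∈ Finset.Icc 1 n, (n.choose h : ℝ) * ((e : ℝ) - 1) ^ h * ((h : ℝ) - 1)

/-- `Q(e, n) = (1/4) (U + √(U² + 4 n e^{n-1}))²`. -/
noncomputable def Qfun (e n : ℕ) : ℝ :=
  (1 / 4) * (Ufun e n + Real.sqrt ((Ufun e n) ^ 2 + 4 * (n : ℝ) * (e : ℝ) ^ (n - 1))) ^ 2

lemma Ufun_term_nonneg {e : ℕ} (he : 2 ≤ e) (k h : ℕ) (hh : h ∈ Finset.Icc 1 k) :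
    0 ≤ (k.choose h : ℝ) * ((e : ℝ) - 1) ^ h * ((h : ℝ) - 1) := by
  simp only [Finset.mem_Icc] at hh
  have h1 : (1:ℝ) ≤ h := by exact_mod_cast hh.1
  have he1 : (0:ℝ) ≤ (e:ℝ) - 1 := by
    have : (2:ℝ) ≤ e := by exact_mod_cast he
    linarith
  apply mul_nonneg (mul_nonneg (Nat.cast_nonneg _) (pow_nonneg he1 h))
  linarith

lemma Ufun_nonneg {e : ℕ} (he : 2 ≤ e) (n : ℕ) : 0 ≤ Ufun e n :=
  Finset.sum_nonneg (fun h hh => Ufun_term_nonneg he n h hh)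

lemma Ufun_mono {e : ℕ} (he : 2 ≤ e) {m n : ℕ} (hmn : m ≤ n) : Ufun e m ≤ Ufun e n := by
  unfold Ufun
  calc ∑ h ∈ Finset.Icc 1 m, (m.choose h : ℝ) * ((e:ℝ)-1)^h * ((h:ℝ)-1)
      ≤ ∑ h ∈ Finset.Icc 1 m, (n.choose h : ℝ) * ((e:ℝ)-1)^h * ((h:ℝ)-1) := by
        apply Finset.sum_le_sum
        intro h hh
        simp only [Finset.mem_Icc] at hh
        have h1 : (1:ℝ) ≤ h := by exact_mod_cast hh.1
        have he1 : (0:ℝ) ≤ (e:ℝ) - 1 := by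
          have : (2:ℝ) ≤ e := by exact_mod_cast he
          linarith
        have hc : (m.choose h : ℝ) ≤ (n.choose h : ℝ) := by
          exact_mod_cast Nat.choose_le_choose h hmn
        have := pow_nonneg he1 h
        apply mul_le_mul_of_nonneg_right (mul_le_mul_of_nonneg_right hc this)
        linarith
    _ ≤ ∑ h ∈ Finset.Icc 1 n, (n.choose h : ℝ) * ((e:ℝ)-1)^h * ((h:ℝ)-1) :=
        Finset.sum_le_sum_of_subset_of_nonneg (Finset.Icc_subset_Icc_right hmn)
          (fun h hh _ => Ufun_term_nonneg he n h hh)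

/-- For fixed `e ≥ 2`, the function `n ↦ Q(e, n)` is strictly increasing for `n ≥ 1`. -/
theorem Qfun_strictMonoOn (e : ℕ) (he : 2 ≤ e) :
    StrictMonoOn (fun n => Qfun e n) {n : ℕ | 1 ≤ n} := by
  intro m hm n hn hmn
  simp only [Set.mem_setOf_eq] at hm hn
  have he1 : (1:ℝ) ≤ (e:ℝ) := by
    have : (2:ℝ) ≤ e := by exact_mod_cast he
    linarith
  have hU1 : 0 ≤ Ufun e m := Ufun_nonneg he m
  have hU12 : Ufun e m ≤ Ufun e n := Ufun_mono he hmn.le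
  have hmr : (1:ℝ) ≤ (m:ℝ) := by exact_mod_cast hm
  have hmn' : (m:ℝ) < (n:ℝ) := by exact_mod_cast hmn
  have hpm : (0:ℝ) < (e:ℝ) ^ (m-1) := pow_pos (by linarith) _
  have hpmn : (e:ℝ) ^ (m-1) ≤ (e:ℝ) ^ (n-1) := pow_le_pow_right₀ he1 (by omega)
  have hA1 : (0:ℝ) < 4 * (m:ℝ) * (e:ℝ) ^ (m-1) := by positivity
  have hA : 4 * (m:ℝ) * (e:ℝ) ^ (m-1) < 4 * (n:ℝ) * (e:ℝ) ^ (n-1) := by nlinarith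
  have hsq : (Ufun e m)^2 ≤ (Ufun e n)^2 := pow_le_pow_left₀ hU1 hU12 2
  have hs : Real.sqrt ((Ufun e m)^2 + 4 * (m:ℝ) * (e:ℝ) ^ (m-1)) <
      Real.sqrt ((Ufun e n)^2 + 4 * (n:ℝ) * (e:ℝ) ^ (n-1)) := by
    apply Real.sqrt_lt_sqrt (by positivity)
    linarith
  have hs1 : 0 < Real.sqrt ((Ufun e m)^2 + 4 * (m:ℝ) * (e:ℝ) ^ (m-1)) :=
    Real.sqrt_pos.mpr (by nlinarith [sq_nonneg (Ufun e m)])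
  simp only [Qfun]
  nlinarith [hs, hs1, hU1, hU12]
end

section
/- For every finite subset K of the positive integers with |K| ≥ 2, there exists an integer λ and a harmonious (G, K', λ) strong difference family Σ, where G is any group of order min(K) and the underlying set of K' ∪ {min(K)} equals K. -/
namespace SDFAux

set_option linter.unusedSectionVars false

variable {G : Type*} [AddGroup G] [Fintype G] [DecidableEq G]

lemma count_mDiffs_ne (B : Multiset G) {g : G} (hg : g ≠ 0) :
    (mDiffs B).count g = (B.map fun x => B.count (-g + x)).sum := by
  rw [mDiffs, Multiset.count_bind]
  congr 1
  refine Multiset.map_congr rfl fun x hx => ?_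
  have key : x - (-g + x) = g := by
    rw [sub_eq_add_neg, neg_add_rev, neg_neg, ← add_assoc, add_neg_cancel, zero_add]
  have h1 := Multiset.count_map_eq_count' (fun y => x - y) (B.erase x)
    sub_right_injective (-g + x)
  rw [key] at h1
  rw [h1]
  refine Multiset.count_erase_of_ne (fun h => hg ?_) B
  exact neg_eq_zero.mp (add_right_cancel (h.trans (zero_add x).symm))

lemma count_mDiffs_zero (B : Multiset G) :
    (mDiffs B).count 0 + Multiset.card B = (B.map fun x => B.count x).sum := by
  rw [mDiffs, Multiset.count_bind]
  have h1 : ∀ x ∈ B, (((B.erase x).map fun y => x - y)).count 0 = B.count x - 1 := by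
    intro x hx
    have h2 := Multiset.count_map_eq_count' (fun y => x - y) (B.erase x)
      sub_right_injective x
    simp only [sub_self] at h2
    rw [h2, Multiset.count_erase_self]
  rw [Multiset.map_congr rfl h1]
  have h2 : (B.map fun x => B.count x) = B.map fun x => (B.count x - 1) + 1 := by
    refine Multiset.map_congr rfl fun x hx => ?_
    have := Multiset.count_pos.mpr hx
    omega
  rw [h2, Multiset.sum_map_add]
  simp

/-- `d` copies of `0` together with all of `G`. -/
def famC (d : ℕ) : Multiset G := Multiset.replicate d 0 + Finset.univ.val

lemma card_univ_val : Multiset.card (Finset.univ.val : Multiset G) = Fintype.card G := rfl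

lemma count_famC (d : ℕ) (z : G) :
    (famC (G := G) d).count z = (if (0 : G) = z then d else 0) + 1 := by
  simp [famC, Multiset.count_replicate, Multiset.count_univ]

lemma card_famC (d : ℕ) : Multiset.card (famC (G := G) d) = d + Fintype.card G := by
  simp [famC, card_univ_val]

lemma sum_univ_map (f : G → ℕ) : ((Finset.univ.val : Multiset G).map f).sum = ∑ x : G, f x :=
  (Finset.sum_eq_multiset_sum _ _).symm

lemma c_repl_ne (j : ℕ) {g : G} (hg : g ≠ 0) :
    (mDiffs (Multiset.replicate j (0 : G))).count g = 0 := by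
  rw [count_mDiffs_ne _ hg]
  rw [Multiset.map_replicate, Multiset.sum_replicate, smul_eq_mul]
  have h0 : (Multiset.replicate j (0 : G)).count (-g + (0 : G)) = 0 := by
    rw [add_zero, Multiset.count_replicate, if_neg]
    intro h
    exact hg (neg_eq_zero.mp h.symm)
  rw [h0, Nat.mul_zero]

lemma c_repl_zero (j : ℕ) :
    (mDiffs (Multiset.replicate j (0 : G))).count 0 = j * (j - 1) := by
  have h := count_mDiffs_zero (Multiset.replicate j (0 : G))
  rw [Multiset.map_replicate, Multiset.sum_replicate, Multiset.count_replicate_self,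
    Multiset.card_replicate, smul_eq_mul] at h
  have h2 : j * (j - 1) + j = j * j := by
    cases j with
    | zero => simp
    | succ e => simp [Nat.succ_sub_one]; ring
  exact Nat.add_right_cancel (h.trans h2.symm)

lemma c_univ_ne {g : G} (hg : g ≠ 0) :
    (mDiffs (Finset.univ.val : Multiset G)).count g = Fintype.card G := by
  rw [count_mDiffs_ne _ hg]
  simp [Multiset.count_univ, card_univ_val]

lemma c_univ_zero : (mDiffs (Finset.univ.val : Multiset G)).count 0 = 0 := by
  have h := count_mDiffs_zero (Finset.univ.val : Multiset G)
  simp only [Multiset.count_univ, Multiset.map_const', Multiset.sum_replicate,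
    smul_eq_mul, mul_one] at h
  omega

lemma c_famC_ne (d : ℕ) {g : G} (hg : g ≠ 0) :
    (mDiffs (famC (G := G) d)).count g = 2 * d + Fintype.card G := by
  have hcond : ∀ x : G, (famC (G := G) d).count (-g + x) = (if x = g then d else 0) + 1 := by
    intro x
    rw [count_famC]
    congr 1
    by_cases h : x = g
    · subst h
      simp
    · rw [if_neg h, if_neg (fun h0 => h (neg_add_eq_zero.mp h0.symm).symm)]
  rw [count_mDiffs_ne _ hg]
  simp_rw [hcond]
  rw [show (famC (G := G) d) = Multiset.replicate d 0 + Finset.univ.val from rfl,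
    Multiset.map_add, Multiset.sum_add, Multiset.map_replicate, Multiset.sum_replicate,
    sum_univ_map, smul_eq_mul]
  rw [Finset.sum_add_distrib, Finset.sum_ite_eq' Finset.univ g (fun _ => d)]
  simp only [Finset.mem_univ, if_true, if_neg (Ne.symm hg), Finset.sum_const,
    Finset.card_univ, smul_eq_mul, mul_one]
  omega

lemma c_famC_zero (d : ℕ) : (mDiffs (famC (G := G) d)).count 0 = d * d + d := by
  have h := count_mDiffs_zero (famC (G := G) d)
  rw [card_famC] at h
  have hcond : ∀ x : G, (famC (G := G) d).count x = (if x = 0 then d else 0) + 1 := by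
    intro x
    rw [count_famC]
    congr 1
    by_cases hx : x = 0
    · subst hx; simp
    · rw [if_neg hx, if_neg (fun h0 => hx h0.symm)]
  have hsum : ((famC (G := G) d).map fun x => (famC (G := G) d).count x).sum
      = d * (d + 1) + (d + Fintype.card G) := by
    simp_rw [hcond]
    rw [show (famC (G := G) d) = Multiset.replicate d 0 + Finset.univ.val from rfl,
      Multiset.map_add, Multiset.sum_add, Multiset.map_replicate, Multiset.sum_replicate,
      sum_univ_map, smul_eq_mul]
    rw [Finset.sum_add_distrib, Finset.sum_ite_eq' Finset.univ (0 : G) (fun _ => d)]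
    simp only [Finset.mem_univ, if_true, if_pos rfl, Finset.sum_const,
      Finset.card_univ, smul_eq_mul, mul_one]
  rw [hsum] at h
  have h2 : (mDiffs (famC (G := G) d)).count 0 = d * (d + 1) := Nat.add_right_cancel h
  rw [h2]; ring

/-- The family of blocks attached to a block size `Fintype.card G + d`. -/
def fam (d : ℕ) : Multiset (Multiset G) :=
  Multiset.replicate ((Fintype.card G + d) * Fintype.card G) (famC d)
  + Multiset.replicate (d * Fintype.card G) (Multiset.replicate (Fintype.card G + d) 0)
  + Multiset.replicate ((Fintype.card G + d) * (d - 1) * (Fintype.card G + 2 * d))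
      Finset.univ.val

lemma count_fam (d : ℕ) (hd : 1 ≤ d) (g : G) :
    ((fam (G := G) d).bind mDiffs).count g
      = (Fintype.card G + d) * Fintype.card G * d * (Fintype.card G + 2 * d) := by
  obtain ⟨e, rfl⟩ : ∃ e, d = e + 1 := ⟨d - 1, by omega⟩
  rw [Multiset.count_bind]
  simp only [fam, Multiset.map_add, Multiset.map_replicate, Multiset.sum_add,
    Multiset.sum_replicate, smul_eq_mul, Nat.add_sub_cancel]
  by_cases hg : g = 0
  · subst hg
    rw [c_famC_zero, c_repl_zero, c_univ_zero]
    have h1 : Fintype.card G + (e + 1) - 1 = Fintype.card G + e := by omega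
    rw [h1]
    ring
  · rw [c_famC_ne _ hg, c_repl_ne _ hg, c_univ_ne hg]
    ring

lemma sum_sizes_fam (d : ℕ) (hd : 1 ≤ d) :
    ((fam (G := G) d).map Multiset.card).sum
      = (Fintype.card G + d) * Fintype.card G * d * (Fintype.card G + 2 * d) := by
  obtain ⟨e, rfl⟩ : ∃ e, d = e + 1 := ⟨d - 1, by omega⟩
  simp only [fam, Multiset.map_add, Multiset.map_replicate, Multiset.sum_add,
    Multiset.sum_replicate, smul_eq_mul, card_famC, Multiset.card_replicate,
    card_univ_val, Nat.add_sub_cancel]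
  ring

lemma mem_sizes_fam {d x : ℕ} (hx : x ∈ (fam (G := G) d).map Multiset.card) :
    x = d + Fintype.card G ∨ x = Fintype.card G := by
  simp only [fam, Multiset.map_add, Multiset.map_replicate, Multiset.mem_add,
    Multiset.mem_replicate, card_famC, Multiset.card_replicate, card_univ_val] at hx
  rcases hx with (⟨-, h⟩ | ⟨-, h⟩) | ⟨-, h⟩
  · exact Or.inl h
  · exact Or.inl (by omega)
  · exact Or.inr h

lemma self_mem_sizes_fam (d : ℕ) (hm : 0 < Fintype.card G) :
    d + Fintype.card G ∈ (fam (G := G) d).map Multiset.card := by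
  simp only [fam, Multiset.map_add, Multiset.map_replicate, Multiset.mem_add,
    Multiset.mem_replicate, card_famC]
  exact Or.inl (Or.inl ⟨by positivity, trivial⟩)

end SDFAux

open SDFAux in
/-- For every finite set `K` of positive integers with at least two elements and every
group `G` of order `min K`, there exist an index `λ` and a harmonious `(G, K', λ)`
strong difference family `Σ` such that the underlying set of `K' ∪ {min K}` is
exactly `K` (where `K'` is the multiset of block sizes of `Σ`). -/
theorem exists_harmonious_sdf_with_prescribed_sizes
    (K : Finset ℕ) (hne : K.Nonempty) (hpos : ∀ k ∈ K, 0 < k) (hcard : 2 ≤ K.card)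
    (G : Type*) [AddGroup G] [Fintype G] [DecidableEq G]
    (hG : Fintype.card G = K.min' hne) :
    ∃ (lam : ℕ) (Sig : Multiset (Multiset G)),
      (∀ g : G, ((Sig.bind mDiffs).count g) = lam) ∧
      (Sig.map Multiset.card).sum = lam ∧
      insert (K.min' hne) (Sig.map Multiset.card).toFinset = K := by
  classical
  have hmK : K.min' hne ∈ K := K.min'_mem hne
  have hm0 : 0 < Fintype.card G := Fintype.card_pos
  have hlt : ∀ k ∈ K.erase (K.min' hne), Fintype.card G < k := by
    intro k hk
    rcases Finset.mem_erase.mp hk with ⟨hk1, hk2⟩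
    have := K.min'_le k hk2
    omega
  refine ⟨∑ k ∈ K.erase (K.min' hne),
      (Fintype.card G + (k - Fintype.card G)) * Fintype.card G * (k - Fintype.card G) *
        (Fintype.card G + 2 * (k - Fintype.card G)),
    (K.erase (K.min' hne)).val.bind (fun k => fam (k - Fintype.card G)), ?_, ?_, ?_⟩
  · intro g
    rw [Multiset.bind_assoc, Multiset.count_bind, Finset.sum_eq_multiset_sum]
    refine congrArg Multiset.sum (Multiset.map_congr rfl fun k hk => ?_)
    exact count_fam _ (by have := hlt k hk; omega) g
  · rw [Multiset.map_bind, Multiset.sum_bind, Finset.sum_eq_multiset_sum]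
    refine congrArg Multiset.sum (Multiset.map_congr rfl fun k hk => ?_)
    exact sum_sizes_fam _ (by have := hlt k hk; omega)
  · ext x
    simp only [Finset.mem_insert, Multiset.mem_toFinset, Multiset.map_bind, Multiset.mem_bind]
    constructor
    · rintro (rfl | ⟨k, hk, hxk⟩)
      · exact hmK
      · have hk' : k ∈ K.erase (K.min' hne) := hk
        have hklt := hlt k hk'
        have hkK := (Finset.mem_erase.mp hk').2
        rcases mem_sizes_fam hxk with rfl | rfl
        · rwa [Nat.sub_add_cancel (le_of_lt hklt)]
        · rw [hG]; exact hmK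
    · intro hxK
      by_cases hx : x = K.min' hne
      · exact Or.inl hx
      · right
        have hx' : x ∈ K.erase (K.min' hne) := Finset.mem_erase.mpr ⟨hx, hxK⟩
        refine ⟨x, hx', ?_⟩
        have hxlt := hlt x hx'
        have h2 := self_mem_sizes_fam (G := G) (x - Fintype.card G) hm0
        rwa [Nat.sub_add_cancel (le_of_lt hxlt)] at h2
end
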